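/- arXiv:1501.04768 — 3 statements merged into one kernel-verified Lean document; each statement's English description precedes it below -/
import Mathlib

section
/- Every simplicial poset S admits a sign convention: an assignment of incidence numbers [J:I] ∈ {+1, -1} to each pair I < J with |J| = |I| + 1, such that for every pair I < J with |J| = |I| + 2, if J', J'' are the two elements between I and J, then [J:J']·[J':I] + [J:J'']·[J'':I] = 0. -/
/-- A finite poset `S` with a minimal element is *simplicial* (with rank function `rk`)
if for every `I ∈ S` the lower order ideal `{J : J ≤ I}` is isomorphic to the boolean
lattice of subsets of a `rk I`-element set. -/
def IsSimplicialPoset (S : Type*) [Fintype S] [PartialOrder S] [OrderBot S]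
    (rk : S → ℕ) : Prop :=
  ∀ I : S, Nonempty ({J : S // J ≤ I} ≃o Finset (Fin (rk I)))

section Aux

open Finset

attribute [local instance] Classical.propDecidable

variable {S : Type*} [Fintype S] [PartialOrder S] [OrderBot S] {rk : S → ℕ}

/-- The set of "vertices" (rank-1 elements) below `I`. -/
noncomputable def Vset (rk : S → ℕ) (I : S) : Finset S :=
  Finset.univ.filter (fun a => a ≤ I ∧ rk a = 1)

lemma mem_Vset {I a : S} : a ∈ Vset rk I ↔ a ≤ I ∧ rk a = 1 := by
  simp [Vset]

/-- The rank of an element below `J` equals the cardinality of its image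
in the boolean lattice below `J`. -/
lemma rank_eq_card (hS : IsSimplicialPoset S rk) {J : S}
    (φ : {K : S // K ≤ J} ≃o Finset (Fin (rk J))) {K : S} (hK : K ≤ J) :
    (φ ⟨K, hK⟩).card = rk K := by
  obtain ⟨ψ⟩ := hS K
  set A : Finset (Fin (rk J)) := φ ⟨K, hK⟩ with hA
  let e : {L : S // L ≤ K} ≃ {B : Finset (Fin (rk J)) // B ⊆ A} :=
  { toFun := fun L => ⟨φ ⟨L.1, L.2.trans hK⟩, by
      rw [hA]
      exact φ.le_iff_le.mpr (Subtype.mk_le_mk.mpr L.2)⟩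
    invFun := fun B => ⟨(φ.symm B.1).1, by
      have h2 : φ.symm A = ⟨K, hK⟩ := by rw [hA, φ.symm_apply_apply]
      have h1 : φ.symm B.1 ≤ (⟨K, hK⟩ : {L : S // L ≤ J}) :=
        h2 ▸ φ.symm.le_iff_le.mpr B.2
      exact h1⟩
    left_inv := fun L => by simp
    right_inv := fun B => by simp }
  have h1 : Fintype.card {L : S // L ≤ K} = 2 ^ rk K := by
    rw [Fintype.card_congr ψ.toEquiv, Fintype.card_finset, Fintype.card_fin]
  have h2 : Fintype.card {L : S // L ≤ K} = 2 ^ A.card := by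
    rw [Fintype.card_congr e,
      Fintype.card_congr (Equiv.subtypeEquivRight (fun B => (Finset.mem_powerset).symm)),
      Fintype.card_coe, Finset.card_powerset]
  exact Nat.pow_right_injective (le_refl 2) (h2.symm.trans h1)

lemma mem_Vset_iff (hS : IsSimplicialPoset S rk) {J : S}
    (φ : {K : S // K ≤ J} ≃o Finset (Fin (rk J))) {K : S} (hK : K ≤ J) (a : S) :
    a ∈ Vset rk K ↔
      ∃ ha : a ≤ J, (φ ⟨a, ha⟩).card = 1 ∧ φ ⟨a, ha⟩ ⊆ φ ⟨K, hK⟩ := by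
  rw [mem_Vset]
  constructor
  · rintro ⟨haK, hra⟩
    refine ⟨haK.trans hK, ?_, ?_⟩
    · rw [rank_eq_card hS φ, hra]
    · exact φ.le_iff_le.mpr (Subtype.mk_le_mk.mpr haK)
  · rintro ⟨ha, hcard, hsub⟩
    have h1 : a ≤ K := Subtype.mk_le_mk.mp (φ.le_iff_le.mp hsub)
    exact ⟨h1, (rank_eq_card hS φ ha).symm.trans hcard⟩

/-- If (in the boolean lattice below `J`) `K` is obtained from `L` by inserting
one new point `x`, then the vertex set of `K` exceeds that of `L` by the unique
vertex corresponding to `x`. -/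
lemma Vset_sdiff (hS : IsSimplicialPoset S rk) {J : S}
    (φ : {K : S // K ≤ J} ≃o Finset (Fin (rk J))) {K L : S} (hK : K ≤ J) (hL : L ≤ J)
    {x : Fin (rk J)} (hx : x ∉ φ ⟨L, hL⟩) (hKL : φ ⟨K, hK⟩ = insert x (φ ⟨L, hL⟩)) :
    Vset rk K \ Vset rk L = {(φ.symm {x}).1} := by
  ext a
  rw [Finset.mem_sdiff, Finset.mem_singleton, mem_Vset_iff hS φ hK,
    mem_Vset_iff hS φ hL]
  constructor
  · rintro ⟨⟨ha, hcard, hsub⟩, hnot⟩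
    obtain ⟨y, hy⟩ := Finset.card_eq_one.mp hcard
    have hyx : y = x := by
      have hymem : y ∈ insert x (φ ⟨L, hL⟩) := by
        rw [← hKL]; exact hsub (by rw [hy]; exact Finset.mem_singleton_self y)
      rcases Finset.mem_insert.mp hymem with h | h
      · exact h
      · exfalso
        exact hnot ⟨ha, hcard, by rw [hy]; exact Finset.singleton_subset_iff.mpr h⟩
    have : φ ⟨a, ha⟩ = {x} := by rw [hy, hyx]
    have h2 : (⟨a, ha⟩ : {K : S // K ≤ J}) = φ.symm {x} := by
      rw [← this, φ.symm_apply_apply]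
    exact congrArg Subtype.val h2
  · intro haeq
    have ha : a ≤ J := haeq ▸ (φ.symm {x}).2
    have hφa : φ ⟨a, ha⟩ = {x} := by
      have : (⟨a, ha⟩ : {K : S // K ≤ J}) = φ.symm {x} := Subtype.ext haeq
      rw [this, φ.apply_symm_apply]
    refine ⟨⟨ha, by rw [hφa]; simp, ?_⟩, ?_⟩
    · rw [hφa, hKL]
      exact Finset.singleton_subset_iff.mpr (Finset.mem_insert_self x _)
    · rintro ⟨ha', hcard', hsub'⟩
      have : φ ⟨a, ha'⟩ = {x} := hφa
      rw [this, Finset.singleton_subset_iff] at hsub'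
      exact hx hsub'

lemma card_singleton_product (f : S → ℕ) (a : S) (Y : Finset S) :
    (({a} ×ˢ Y).filter fun p => f p.1 < f p.2).card
      = (Y.filter fun y => f a < f y).card := by
  rw [Finset.singleton_product, Finset.filter_map, Finset.card_map]
  congr 1

end Aux

/-- every simplicial poset admits a sign convention: incidence numbers
`ε J I = [J:I] ∈ {1, -1}` for covering pairs `I <₁ J`, such that for every `I <₂ J`
with the two intermediate elements `J'`, `J''` one has
`[J:J']·[J':I] + [J:J'']·[J'':I] = 0`. -/
theorem exists_sign_convention {S : Type*} [Fintype S] [PartialOrder S] [OrderBot S]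
    (rk : S → ℕ) (hS : IsSimplicialPoset S rk) :
    ∃ ε : S → S → ℤ,
      (∀ I J : S, I < J → rk J = rk I + 1 → ε J I = 1 ∨ ε J I = -1) ∧
      (∀ I J J' J'' : S, I < J → rk J = rk I + 2 → J' ≠ J'' →
        I < J' → J' < J → I < J'' → J'' < J →
        ε J J' * ε J' I + ε J J'' * ε J'' I = 0) := by
  classical
  set f : S → ℕ := fun a => (Fintype.equivFin S a : ℕ) with hfdef
  have hf : Function.Injective f := fun a b h =>
    (Fintype.equivFin S).injective (Fin.val_injective h)
  set cnt : S → S → ℕ := fun J I =>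
    (((Vset rk J \ Vset rk I) ×ˢ Vset rk I).filter fun p => f p.1 < f p.2).card
    with hcnt
  refine ⟨fun J I => (-1 : ℤ) ^ cnt J I, ?_, ?_⟩
  · intro I J _ _
    rcases Nat.even_or_odd (cnt J I) with h | h
    · exact Or.inl (Even.neg_one_pow h)
    · exact Or.inr (Odd.neg_one_pow h)
  · intro I J J' J'' hIJ hrk hne hIJ' hJ'J hIJ'' hJ''J
    obtain ⟨φ⟩ := hS J
    set A : Finset (Fin (rk J)) := φ ⟨I, hIJ.le⟩ with hAdef
    set A' : Finset (Fin (rk J)) := φ ⟨J', hJ'J.le⟩ with hA'def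
    set A'' : Finset (Fin (rk J)) := φ ⟨J'', hJ''J.le⟩ with hA''def
    set C : Finset (Fin (rk J)) := φ ⟨J, le_rfl⟩ with hCdef
    have hcA : A.card = rk I := rank_eq_card hS φ hIJ.le
    have hcC : C.card = rk I + 2 := by rw [hCdef, rank_eq_card hS φ le_rfl, hrk]
    have hAA' : A ⊂ A' := φ.strictMono (Subtype.mk_lt_mk.mpr hIJ')
    have hA'C : A' ⊂ C := φ.strictMono (Subtype.mk_lt_mk.mpr hJ'J)
    have hAA'' : A ⊂ A'' := φ.strictMono (Subtype.mk_lt_mk.mpr hIJ'')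
    have hA''C : A'' ⊂ C := φ.strictMono (Subtype.mk_lt_mk.mpr hJ''J)
    have hcA' : A'.card = rk I + 1 := by
      have h1 := Finset.card_lt_card hAA'
      have h2 := Finset.card_lt_card hA'C
      omega
    have hcA'' : A''.card = rk I + 1 := by
      have h1 := Finset.card_lt_card hAA''
      have h2 := Finset.card_lt_card hA''C
      omega
    -- extract the new points x', x''
    obtain ⟨x', hx'⟩ : ∃ x', A' \ A = {x'} := by
      apply Finset.card_eq_one.mp
      rw [Finset.card_sdiff_of_subset hAA'.subset]; omega
    obtain ⟨x'', hx''⟩ : ∃ x'', A'' \ A = {x''} := by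
      apply Finset.card_eq_one.mp
      rw [Finset.card_sdiff_of_subset hAA''.subset]; omega
    have hx'mem : x' ∈ A' ∧ x' ∉ A := by
      have : x' ∈ A' \ A := hx' ▸ Finset.mem_singleton_self x'
      exact Finset.mem_sdiff.mp this
    have hx''mem : x'' ∈ A'' ∧ x'' ∉ A := by
      have : x'' ∈ A'' \ A := hx'' ▸ Finset.mem_singleton_self x''
      exact Finset.mem_sdiff.mp this
    have hA'eq : A' = insert x' A := by
      refine (Finset.eq_of_subset_of_card_le ?_ ?_).symm
      · exact Finset.insert_subset hx'mem.1 hAA'.subset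
      · rw [Finset.card_insert_of_notMem hx'mem.2]; omega
    have hA''eq : A'' = insert x'' A := by
      refine (Finset.eq_of_subset_of_card_le ?_ ?_).symm
      · exact Finset.insert_subset hx''mem.1 hAA''.subset
      · rw [Finset.card_insert_of_notMem hx''mem.2]; omega
    have hxx : x' ≠ x'' := by
      intro h
      apply hne
      have : A' = A'' := by rw [hA'eq, hA''eq, h]
      have h2 : (⟨J', hJ'J.le⟩ : {K : S // K ≤ J}) = ⟨J'', hJ''J.le⟩ :=
        φ.injective (by rw [← hA'def, ← hA''def, this])
      exact congrArg Subtype.val h2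
    have hx''A' : x'' ∉ A' := by
      rw [hA'eq]
      simp only [Finset.mem_insert, not_or]
      exact ⟨fun h => hxx h.symm, hx''mem.2⟩
    have hx'A'' : x' ∉ A'' := by
      rw [hA''eq]
      simp only [Finset.mem_insert, not_or]
      exact ⟨hxx, hx'mem.2⟩
    have hCeq' : C = insert x'' A' := by
      refine (Finset.eq_of_subset_of_card_le ?_ ?_).symm
      · exact Finset.insert_subset (hA''C.subset hx''mem.1) hA'C.subset
      · rw [Finset.card_insert_of_notMem hx''A']; omega
    have hCeq'' : C = insert x' A'' := by
      refine (Finset.eq_of_subset_of_card_le ?_ ?_).symm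
      · exact Finset.insert_subset (hA'C.subset hx'mem.1) hA''C.subset
      · rw [Finset.card_insert_of_notMem hx'A'']; omega
    set va : S := (φ.symm {x'}).1 with hva
    set vb : S := (φ.symm {x''}).1 with hvb
    have hVJ'I : Vset rk J' \ Vset rk I = {va} :=
      Vset_sdiff hS φ hJ'J.le hIJ.le hx'mem.2 hA'eq
    have hVJ''I : Vset rk J'' \ Vset rk I = {vb} :=
      Vset_sdiff hS φ hJ''J.le hIJ.le hx''mem.2 hA''eq
    have hVJJ' : Vset rk J \ Vset rk J' = {vb} :=
      Vset_sdiff hS φ le_rfl hJ'J.le hx''A' hCeq'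
    have hVJJ'' : Vset rk J \ Vset rk J'' = {va} :=
      Vset_sdiff hS φ le_rfl hJ''J.le hx'A'' hCeq''
    have hvab : va ≠ vb := by
      intro h
      apply hxx
      have h2 : φ.symm {x'} = φ.symm {x''} := Subtype.ext h
      have h3 : ({x'} : Finset (Fin (rk J))) = {x''} := by
        rw [← φ.apply_symm_apply ({x'} : Finset (Fin (rk J))), h2, φ.apply_symm_apply]
      exact Finset.singleton_injective h3
    have hvaI : va ∉ Vset rk I := by
      have : va ∈ Vset rk J' \ Vset rk I := hVJ'I ▸ Finset.mem_singleton_self va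
      exact (Finset.mem_sdiff.mp this).2
    have hvbI : vb ∉ Vset rk I := by
      have : vb ∈ Vset rk J'' \ Vset rk I := hVJ''I ▸ Finset.mem_singleton_self vb
      exact (Finset.mem_sdiff.mp this).2
    have hVsubJ' : Vset rk I ⊆ Vset rk J' := by
      intro a ha
      rw [mem_Vset] at ha ⊢
      exact ⟨ha.1.trans hIJ'.le, ha.2⟩
    have hVsubJ'' : Vset rk I ⊆ Vset rk J'' := by
      intro a ha
      rw [mem_Vset] at ha ⊢
      exact ⟨ha.1.trans hIJ''.le, ha.2⟩
    have hVJ'eq : Vset rk J' = insert va (Vset rk I) := by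
      ext a
      rw [Finset.mem_insert]
      constructor
      · intro haJ'
        by_cases h : a ∈ Vset rk I
        · exact Or.inr h
        · left
          have : a ∈ Vset rk J' \ Vset rk I := Finset.mem_sdiff.mpr ⟨haJ', h⟩
          rw [hVJ'I] at this
          exact Finset.mem_singleton.mp this
      · rintro (rfl | h)
        · have : va ∈ Vset rk J' \ Vset rk I := hVJ'I ▸ Finset.mem_singleton_self va
          exact (Finset.mem_sdiff.mp this).1
        · exact hVsubJ' h
    have hVJ''eq : Vset rk J'' = insert vb (Vset rk I) := by
      ext a
      rw [Finset.mem_insert]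
      constructor
      · intro haJ''
        by_cases h : a ∈ Vset rk I
        · exact Or.inr h
        · left
          have : a ∈ Vset rk J'' \ Vset rk I := Finset.mem_sdiff.mpr ⟨haJ'', h⟩
          rw [hVJ''I] at this
          exact Finset.mem_singleton.mp this
      · rintro (rfl | h)
        · have : vb ∈ Vset rk J'' \ Vset rk I := hVJ''I ▸ Finset.mem_singleton_self vb
          exact (Finset.mem_sdiff.mp this).1
        · exact hVsubJ'' h
    -- compute the counts
    set c : S → ℕ := fun v => ((Vset rk I).filter fun y => f v < f y).card with hc
    have hcntJ'I : cnt J' I = c va := by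
      rw [hcnt]
      simp only
      rw [hVJ'I, card_singleton_product]
    have hcntJ''I : cnt J'' I = c vb := by
      rw [hcnt]
      simp only
      rw [hVJ''I, card_singleton_product]
    have hcntJJ' : cnt J J' = c vb + (if f vb < f va then 1 else 0) := by
      rw [hcnt]
      simp only
      rw [hVJJ', hVJ'eq, card_singleton_product, Finset.filter_insert]
      split
      · rw [Finset.card_insert_of_notMem (fun h => hvaI (Finset.mem_filter.mp h).1)]
      · rw [Nat.add_zero]
    have hcntJJ'' : cnt J J'' = c va + (if f va < f vb then 1 else 0) := by
      rw [hcnt]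
      simp only
      rw [hVJJ'', hVJ''eq, card_singleton_product, Finset.filter_insert]
      split
      · rw [Finset.card_insert_of_notMem (fun h => hvbI (Finset.mem_filter.mp h).1)]
      · rw [Nat.add_zero]
    have hfab : f va ≠ f vb := fun h => hvab (hf h)
    rw [← pow_add, ← pow_add, hcntJ'I, hcntJ''I, hcntJJ', hcntJJ'']
    rcases lt_or_gt_of_ne hfab with h | h
    · rw [if_pos h, if_neg (not_lt.mpr h.le)]
      have : c va + 1 + c vb = (c vb + 0 + c va) + 1 := by omega
      rw [this, pow_succ]
      ring
    · rw [if_pos h, if_neg (not_lt.mpr h.le)]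
      have : c vb + 1 + c va = (c va + 0 + c vb) + 1 := by omega
      rw [this, pow_succ]
      ring
end

section
/- In a simplicial poset, any two saturated chains between I and J (with I ≤ J) are connected by a sequence of elementary flips, where an elementary flip replaces a subchain J_k <₁ T₁ <₁ J_{k+2} by J_k <₁ T₂ <₁ J_{k+2} with T₂ the other element between J_k and J_{k+2}. -/
/-- A saturated chain: consecutive elements are covering pairs (rank increases by one). -/
def IsSatChain {S : Type*} [PartialOrder S] (rk : S → ℕ) (c : List S) : Prop :=
  c.Chain' (fun a b => a < b ∧ rk b = rk a + 1)

/-- An elementary flip replaces a length-2 subchain `a <₁ T₁ <₁ b` of a saturated chain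
by `a <₁ T₂ <₁ b`, where `T₂` is the other element between `a` and `b`. -/
def Flip {S : Type*} [PartialOrder S] (rk : S → ℕ) (c₁ c₂ : List S) : Prop :=
  IsSatChain rk c₁ ∧ IsSatChain rk c₂ ∧
    ∃ (l r : List S) (a T₁ T₂ b : S), T₁ ≠ T₂ ∧
      c₁ = l ++ a :: T₁ :: b :: r ∧ c₂ = l ++ a :: T₂ :: b :: r

section Aux
set_option linter.unusedSectionVars false

open Relation List

section Basic
variable {S : Type*} [PartialOrder S] {rk : S → ℕ}

lemma le_getLast : ∀ {c : List S}, c.Chain' (· < ·) → ∀ {B : S}, c.getLast? = some B →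
    ∀ a ∈ c, a ≤ B
  | [], _, _, hB, _, ha => by simp at hB
  | [x], _, _, hB, a, ha => by
      simp at hB ha; subst hB; subst ha; rfl
  | x :: y :: t, hc, B, hB, a, ha => by
      rw [List.getLast?_cons_cons] at hB
      rcases List.mem_cons.mp ha with rfl | ha
      · exact le_of_lt (lt_of_lt_of_le (List.isChain_cons_cons.mp hc).1
          (le_getLast (List.isChain_cons_cons.mp hc).2 hB (y) (List.mem_cons_self)))
      · exact le_getLast (List.isChain_cons_cons.mp hc).2 hB a ha

lemma IsSatChain.lt_chain {c : List S} (h : IsSatChain rk c) : c.Chain' (· < ·) :=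
  List.IsChain.imp (fun _ _ hab => hab.1) h

lemma Flip.head_eq {c₁ c₂ : List S} (h : Flip rk c₁ c₂) : c₁.head? = c₂.head? := by
  obtain ⟨-, -, l, r, a, T₁, T₂, b, -, rfl, rfl⟩ := h
  cases l <;> simp

lemma rtg_head {c₁ c₂ : List S} (h : ReflTransGen (Flip rk) c₁ c₂) :
    c₁.head? = c₂.head? := by
  induction h with
  | refl => rfl
  | tail _ hbc ih => exact ih.trans hbc.head_eq

lemma sat_cons_of_head {x : S} {d₁ d : List S} (hd : IsSatChain rk d)
    (hh : d.head? = d₁.head?) (h1 : IsSatChain rk (x :: d₁)) : IsSatChain rk (x :: d) := by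
  rw [IsSatChain, List.Chain', List.isChain_cons] at h1 ⊢
  exact ⟨fun y hy => h1.1 y (hh ▸ hy), hd⟩

lemma Flip.cons {x : S} {d₁ d₂ : List S} (h : Flip rk d₁ d₂)
    (h1 : IsSatChain rk (x :: d₁)) : Flip rk (x :: d₁) (x :: d₂) := by
  obtain ⟨hs1, hs2, l, r, a, T₁, T₂, b, hne, he1, he2⟩ := h
  refine ⟨h1, sat_cons_of_head hs2 (he2 ▸ he1 ▸ by cases l <;> simp) h1,
    x :: l, r, a, T₁, T₂, b, hne, by simp [he1], by simp [he2]⟩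

lemma rtg_cons {x : S} {d₁ d₂ : List S} (h : ReflTransGen (Flip rk) d₁ d₂)
    (hs : IsSatChain rk (x :: d₁)) : ReflTransGen (Flip rk) (x :: d₁) (x :: d₂) := by
  induction h with
  | refl => exact .refl
  | @tail b c hab hbc ih =>
      have hxb : IsSatChain rk (x :: b) :=
        sat_cons_of_head hbc.1 (rtg_head hab).symm hs
      exact ih.tail (hbc.cons hxb)

end Basic

section FinsetPart
variable {α : Type*} [DecidableEq α]

lemma exists_satChain : ∀ (n : ℕ) (A B : Finset α), A ⊆ B → (B \ A).card = n →
    ∃ d : List (Finset α), IsSatChain Finset.card d ∧ d.head? = some A ∧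
      d.getLast? = some B
  | 0, A, B, hAB, hn => by
      have : A = B := by
        have : B \ A = ∅ := Finset.card_eq_zero.mp hn
        have := Finset.sdiff_eq_empty_iff_subset.mp this
        exact Finset.Subset.antisymm hAB this
      exact ⟨[A], by simp [IsSatChain, List.Chain'], rfl, by simp [this]⟩
  | n + 1, A, B, hAB, hn => by
      have hne : (B \ A).Nonempty := by
        rw [← Finset.card_pos, hn]; omega
      obtain ⟨z, hz⟩ := hne
      rw [Finset.mem_sdiff] at hz
      have hsub : insert z A ⊆ B := Finset.insert_subset hz.1 hAB
      have hcard : (B \ insert z A).card = n := by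
        rw [Finset.sdiff_insert]
        rw [Finset.card_erase_of_mem (by rw [Finset.mem_sdiff]; exact hz), hn]
        omega
      obtain ⟨d, hd, hdh, hdl⟩ := exists_satChain n (insert z A) B hsub hcard
      obtain ⟨d', rfl⟩ : ∃ d', d = insert z A :: d' := by
        cases d with
        | nil => simp at hdh
        | cons a d' => simp at hdh; exact ⟨d', by rw [hdh]⟩
      refine ⟨A :: insert z A :: d', ?_, rfl, by rw [List.getLast?_cons_cons]; exact hdl⟩
      rw [IsSatChain, List.Chain', List.isChain_cons_cons]
      exact ⟨⟨Finset.ssubset_insert hz.2, Finset.card_insert_of_notMem hz.2⟩, hd⟩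

lemma sat_length : ∀ (c : List (Finset α)) (A B : Finset α), IsSatChain Finset.card c →
    c.head? = some A → c.getLast? = some B → B.card + 1 = A.card + c.length
  | [], A, B, _, hh, _ => by simp at hh
  | [x], A, B, _, hh, hl => by simp_all
  | x :: y :: t, A, B, hc, hh, hl => by
      simp only [List.head?_cons, Option.some.injEq] at hh
      subst hh
      rw [List.getLast?_cons_cons] at hl
      have := sat_length (y :: t) y B (List.isChain_cons_cons.mp hc).2 rfl hl
      have h2 := (List.isChain_cons_cons.mp hc).1.2
      simp only [List.length_cons] at this ⊢
      omega

lemma cover_insert {A T : Finset α} (h : A ⊆ T) (hc : T.card = A.card + 1) :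
    ∃ x, x ∉ A ∧ T = insert x A := by
  have h1 : (T \ A).card = 1 := by rw [Finset.card_sdiff_of_subset h]; omega
  obtain ⟨x, hx⟩ := Finset.card_eq_one.mp h1
  refine ⟨x, ?_, ?_⟩
  · have : x ∈ T \ A := hx ▸ Finset.mem_singleton_self x
    exact (Finset.mem_sdiff.mp this).2
  · have := Finset.sdiff_union_of_subset h
    rw [hx] at this
    rw [← this]; ext a; simp [or_comm]

lemma key : ∀ (n : ℕ) (c₁ c₂ : List (Finset α)), c₁.length = n →
    IsSatChain Finset.card c₁ → IsSatChain Finset.card c₂ →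
    c₁.head? = c₂.head? → c₁.getLast? = c₂.getLast? →
    ReflTransGen (Flip Finset.card) c₁ c₂ := by
  intro n
  induction n using Nat.strong_induction_on with
  | _ n ih =>
  intro c₁ c₂ hlen h₁ h₂ hh hl
  match c₁, c₂ with
  | [], c₂ =>
      cases c₂ with
      | nil => exact .refl
      | cons a t => simp at hh
  | [A], c₂ =>
      cases c₂ with
      | nil => simp at hh
      | cons y t =>
        have hy : y = A := by simpa using hh.symm
        subst hy
        cases t with
        | nil => exact .refl
        | cons z t' =>
          exfalso
          simp only [List.getLast?_singleton, List.getLast?_cons_cons] at hl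
          have hAz : y < z := (List.isChain_cons_cons.mp h₂).1.1
          have hzA : z ≤ y := le_getLast (List.isChain_cons_cons.mp h₂.lt_chain).2 hl.symm z
            (List.mem_cons_self)
          exact absurd (lt_of_lt_of_le hAz hzA) (lt_irrefl y)
  | A :: T₁ :: t₁, c₂ =>
      -- get the common last element B
      obtain ⟨B, hB⟩ : ∃ B, (A :: T₁ :: t₁).getLast? = some B :=
        Option.isSome_iff_exists.mp (List.getLast?_isSome.mpr (by simp))
      have hAT₁ : A < T₁ ∧ T₁.card = A.card + 1 := (List.isChain_cons_cons.mp h₁).1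
      have s₁ : IsSatChain Finset.card (T₁ :: t₁) := (List.isChain_cons_cons.mp h₁).2
      have hlt1 : (T₁ :: t₁).getLast? = some B := by
        rwa [List.getLast?_cons_cons] at hB
      have hT₁B : T₁ ≤ B := le_getLast s₁.lt_chain hlt1 T₁ (List.mem_cons_self)
      cases c₂ with
      | nil => simp at hh
      | cons y t =>
        have hy : y = A := by simpa using hh.symm
        subst hy
        cases t with
        | nil =>
          exfalso
          have : B = y := by
            rw [hB] at hl; simpa using hl
          exact absurd (lt_of_lt_of_le hAT₁.1 (this ▸ hT₁B)) (lt_irrefl y)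
        | cons T₂ t₂ =>
          rename' y => A
          have hAT₂ : A < T₂ ∧ T₂.card = A.card + 1 := (List.isChain_cons_cons.mp h₂).1
          have s₂ : IsSatChain Finset.card (T₂ :: t₂) := (List.isChain_cons_cons.mp h₂).2
          have hlt2 : (T₂ :: t₂).getLast? = some B := by
            rw [hB, List.getLast?_cons_cons] at hl
            exact hl.symm
          have hT₂B : T₂ ≤ B := le_getLast s₂.lt_chain hlt2 T₂ (List.mem_cons_self)
          have hn : n = t₁.length + 2 := by simpa using hlen.symm
          by_cases hT : T₁ = T₂
          · subst hT
            have htail : ReflTransGen (Flip Finset.card) (T₁ :: t₁) (T₁ :: t₂) :=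
              ih (t₁.length + 1) (by omega) _ _ rfl s₁ s₂ rfl (hlt1.trans hlt2.symm)
            exact rtg_cons htail h₁
          · -- the diamond case
            obtain ⟨x, hxA, hT1⟩ := cover_insert (Finset.le_iff_subset.mp hAT₁.1.le) hAT₁.2
            obtain ⟨z, hzA, hT2⟩ := cover_insert (Finset.le_iff_subset.mp hAT₂.1.le) hAT₂.2
            have hxz : x ≠ z := by
              rintro rfl; exact hT (hT1.trans hT2.symm)
            set U : Finset α := T₁ ∪ T₂ with hUdef
            have hU : U = insert x (insert z A) := by
              rw [hUdef, hT1, hT2]; ext a; simp; tauto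
            have hUcard : U.card = A.card + 2 := by
              rw [hU, Finset.card_insert_of_notMem (by simp [hxA, hxz]),
                Finset.card_insert_of_notMem hzA]
            have hT₁U : T₁ < U ∧ U.card = T₁.card + 1 := by
              constructor
              · refine lt_of_le_of_ne (Finset.le_iff_subset.mpr Finset.subset_union_left) ?_
                intro h; rw [← h] at hUcard; omega
              · omega
            have hT₂U : T₂ < U ∧ U.card = T₂.card + 1 := by
              constructor
              · refine lt_of_le_of_ne (Finset.le_iff_subset.mpr Finset.subset_union_right) ?_
                intro h; rw [← h] at hUcard; omega
              · omega
            have hUB : U ⊆ B := Finset.union_subset (Finset.le_iff_subset.mp hT₁B)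
              (Finset.le_iff_subset.mp hT₂B)
            obtain ⟨d, hd, hdh, hdl⟩ := exists_satChain (B \ U).card U B hUB rfl
            obtain ⟨d', rfl⟩ : ∃ d', d = U :: d' := by
              cases d with
              | nil => simp at hdh
              | cons a d' => simp at hdh; exact ⟨d', by rw [hdh]⟩
            have sT1d : IsSatChain Finset.card (T₁ :: U :: d') :=
              List.isChain_cons_cons.mpr ⟨hT₁U, hd⟩
            have sT2d : IsSatChain Finset.card (T₂ :: U :: d') :=
              List.isChain_cons_cons.mpr ⟨hT₂U, hd⟩
            have sAT1d : IsSatChain Finset.card (A :: T₁ :: U :: d') :=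
              List.isChain_cons_cons.mpr ⟨hAT₁, sT1d⟩
            have sAT2d : IsSatChain Finset.card (A :: T₂ :: U :: d') :=
              List.isChain_cons_cons.mpr ⟨hAT₂, sT2d⟩
            have hdl' : (U :: d').getLast? = some B := hdl
            -- lengths
            have len1 := sat_length (U :: d') U B hd rfl hdl
            have lenc1 := sat_length (A :: T₁ :: t₁) A B h₁ rfl hB
            have step1 : ReflTransGen (Flip Finset.card) (A :: T₁ :: t₁)
                (A :: T₁ :: U :: d') := by
              refine rtg_cons (ih (t₁.length + 1) (by omega) _ _ rfl s₁ sT1d rfl ?_) h₁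
              rw [hlt1, List.getLast?_cons_cons, hdl]
            have step2 : Flip Finset.card (A :: T₁ :: U :: d') (A :: T₂ :: U :: d') :=
              ⟨sAT1d, sAT2d, [], d', A, T₁, T₂, U, hT, by simp, by simp⟩
            have step3 : ReflTransGen (Flip Finset.card) (A :: T₂ :: U :: d')
                (A :: T₂ :: t₂) := by
              refine rtg_cons (ih (d'.length + 2) ?_ _ _ rfl sT2d s₂ rfl ?_) sAT2d
              · simp only [List.length_cons] at lenc1 len1
                omega
              · rw [List.getLast?_cons_cons, hdl, hlt2]
            exact step1.trans ((ReflTransGen.single step2).trans step3)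

end FinsetPart


section Transport
variable {S : Type*} [PartialOrder S] {rk : S → ℕ} {β : Type*} [PartialOrder β] {rk' : β → ℕ}

lemma sat_map {f : β → S} (hf : StrictMono f) (hrk : ∀ X, rk (f X) = rk' X)
    {d : List β} (hd : IsSatChain rk' d) : IsSatChain rk (d.map f) := by
  rw [IsSatChain, List.Chain', List.isChain_map]
  exact hd.imp fun a b hab => ⟨hf hab.1, by rw [hrk, hrk, hab.2]⟩

lemma flip_map {f : β → S} (hf : StrictMono f) (hinj : Function.Injective f)
    (hrk : ∀ X, rk (f X) = rk' X)
    {d₁ d₂ : List β} (h : Flip rk' d₁ d₂) : Flip rk (d₁.map f) (d₂.map f) := by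
  obtain ⟨hs1, hs2, l, r, a, T₁, T₂, b, hne, rfl, rfl⟩ := h
  exact ⟨sat_map hf hrk hs1, sat_map hf hrk hs2, l.map f, r.map f, f a, f T₁, f T₂, f b,
    fun h => hne (hinj h), by simp, by simp⟩

lemma rtg_map {f : β → S} (hf : StrictMono f) (hinj : Function.Injective f)
    (hrk : ∀ X, rk (f X) = rk' X)
    {d₁ d₂ : List β} (h : ReflTransGen (Flip rk') d₁ d₂) :
    ReflTransGen (Flip rk) (d₁.map f) (d₂.map f) := by
  induction h with
  | refl => exact .refl
  | tail _ hbc ih => exact ih.tail (flip_map hf hinj hrk hbc)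

lemma sat_map_of_mem (rk : S → ℕ) (rk' : β → ℕ) (P : S → Prop) (f : S → β)
    (hmono : ∀ a b, P a → P b → a < b → f a < f b)
    (hrk : ∀ a b, P a → P b → a < b → rk b = rk a + 1 → rk' (f b) = rk' (f a) + 1) :
    ∀ c : List S, IsSatChain rk c → (∀ a ∈ c, P a) → IsSatChain rk' (c.map f)
  | [], _, _ => by simp [IsSatChain, List.Chain']
  | [x], _, _ => by simp [IsSatChain, List.Chain']
  | x :: y :: t, hc, hP => by
      have h1 := (List.isChain_cons_cons.mp hc).1
      have hx : P x := hP x (by simp)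
      have hy : P y := hP y (by simp)
      have := sat_map_of_mem rk rk' P f hmono hrk (y :: t) (List.isChain_cons_cons.mp hc).2
        (fun a ha => hP a (List.mem_cons_of_mem _ ha))
      simp only [List.map_cons] at this ⊢
      rw [IsSatChain, List.Chain', List.isChain_cons_cons]
      exact ⟨⟨hmono x y hx hy h1.1, hrk x y hx hy h1.1 h1.2⟩, this⟩

end Transport


end Aux

/-- in a simplicial poset, any two saturated chains between `I` and `J`
are connected by a sequence of elementary flips. -/
theorem satChains_connected_by_flips {S : Type*} [Fintype S] [PartialOrder S] [OrderBot S]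
    (rk : S → ℕ) (hS : IsSimplicialPoset S rk) (I J : S) (hIJ : I ≤ J)
    (c₁ c₂ : List S)
    (h₁ : IsSatChain rk c₁) (h₁h : c₁.head? = some I) (h₁l : c₁.getLast? = some J)
    (h₂ : IsSatChain rk c₂) (h₂h : c₂.head? = some I) (h₂l : c₂.getLast? = some J) :
    Relation.ReflTransGen (Flip rk) c₁ c₂ := by
  classical
  obtain ⟨e⟩ := hS J
  -- the rank of an element below J equals the cardinality of its image
  have hrank : ∀ (T : S) (hT : T ≤ J), rk T = (e ⟨T, hT⟩).card := by
    intro T hT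
    obtain ⟨eT⟩ := hS T
    have h1 : Nat.card {T' : S // T' ≤ T} = 2 ^ rk T := by
      rw [Nat.card_congr eT.toEquiv, Nat.card_eq_fintype_card, Fintype.card_finset,
        Fintype.card_fin]
    have Φ : {T' : S // T' ≤ T} ≃ {X : Finset (Fin (rk J)) // X ≤ e ⟨T, hT⟩} := by
      refine ⟨fun T' => ⟨e ⟨T'.1, T'.2.trans hT⟩, e.le_iff_le.mpr T'.2⟩,
        fun X => ⟨(e.symm X.1).1, ?_⟩, fun T' => Subtype.ext (by simp), fun X => Subtype.ext (by simp)⟩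
      have h := e.symm.monotone X.2
      rw [e.symm_apply_apply] at h
      exact h
    have h2 : Nat.card {X : Finset (Fin (rk J)) // X ≤ e ⟨T, hT⟩} = 2 ^ (e ⟨T, hT⟩).card := by
      have Ψ : {X : Finset (Fin (rk J)) // X ≤ e ⟨T, hT⟩} ≃ {X // X ∈ (e ⟨T, hT⟩).powerset} :=
        ⟨fun X => ⟨X.1, Finset.mem_powerset.mpr X.2⟩, fun X => ⟨X.1, Finset.mem_powerset.mp X.2⟩,
          fun X => rfl, fun X => rfl⟩
      rw [Nat.card_congr Ψ, Nat.card_eq_fintype_card, Fintype.card_coe, Finset.card_powerset]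
    have h3 : (2 : ℕ) ^ rk T = 2 ^ (e ⟨T, hT⟩).card := by
      rw [← h1, Nat.card_congr Φ, h2]
    exact Nat.pow_right_injective (le_refl 2) h3
  have hle1 : ∀ a ∈ c₁, a ≤ J := le_getLast h₁.lt_chain h₁l
  have hle2 : ∀ a ∈ c₂, a ≤ J := le_getLast h₂.lt_chain h₂l
  set g : S → Finset (Fin (rk J)) := fun T => if h : T ≤ J then e ⟨T, h⟩ else ∅ with hg
  have hgval : ∀ (T : S) (h : T ≤ J), g T = e ⟨T, h⟩ := fun T h => dif_pos h
  -- the pushed-forward chains are saturated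
  have satg : ∀ c : List S, IsSatChain rk c → (∀ a ∈ c, a ≤ J) →
      IsSatChain Finset.card (c.map g) := by
    refine sat_map_of_mem rk Finset.card (fun a => a ≤ J) g ?_ ?_
    · intro a b ha hb hab
      rw [hgval a ha, hgval b hb]
      exact e.lt_iff_lt.mpr (Subtype.mk_lt_mk.mpr hab)
    · intro a b ha hb hab hr
      rw [hgval a ha, hgval b hb, ← hrank a ha, ← hrank b hb, hr]
  have keyres := key (c₁.map g).length (c₁.map g) (c₂.map g) rfl
    (satg c₁ h₁ hle1) (satg c₂ h₂ hle2)
    (by rw [List.head?_map, List.head?_map, h₁h, h₂h])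
    (by rw [List.getLast?_map, List.getLast?_map, h₁l, h₂l])
  -- pull back along e.symm
  set f' : Finset (Fin (rk J)) → S := fun X => (e.symm X).1 with hf'
  have hf'mono : StrictMono f' := fun X Y h => Subtype.coe_lt_coe.mpr (e.symm.lt_iff_lt.mpr h)
  have hf'rk : ∀ X, rk (f' X) = X.card := by
    intro X
    show rk ((e.symm X).1) = X.card
    rw [hrank _ (e.symm X).2, Subtype.coe_eta, e.apply_symm_apply]
  have hf'inj : Function.Injective f' := by
    intro X Y h
    exact e.symm.injective (Subtype.ext h)
  have final := rtg_map hf'mono hf'inj hf'rk keyres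
  have hback : ∀ c : List S, (∀ a ∈ c, a ≤ J) → (c.map g).map f' = c := by
    intro c hc
    rw [List.map_map]
    have : ∀ a ∈ c, (f' ∘ g) a = id a := by
      intro a ha
      simp only [Function.comp_apply, id_eq]
      rw [hgval a (hc a ha)]
      show (e.symm (e ⟨a, hc a ha⟩)).1 = a
      rw [e.symm_apply_apply]
    rw [List.map_congr_left this, List.map_id]
  rwa [hback c₁ hle1, hback c₂ hle2] at final
end

section
/- Let V be a free k-module of rank m with basis ν₁,…,ν_m, and let J ⊆ [m] be nonempty. For I ⊆ J nonempty let Π_I ⊆ Λ[V] be the principal ideal generated by ⋀_{i∈I} ν_i, and let I(J) ⊆ Λ[V] be the ideal generated by the elements ν_j for j ∈ J. Then the sequence 0 ← I(J) ← ⊕_{I⊆J,|I|=1} Π_I ← ⊕_{I⊆J,|I|=2} Π_I ← ⋯ ← ⊕_{I⊆J,|I|=|J|} Π_I ← 0, with differentials given by signed inclusion maps Π_I ↪ Π_{I'} for I' ⊂ I with |I| = |I'|+1 (signs given by a standard simplicial sign convention), and augmentation given by the sum of inclusions Π_{{j}} ↪ I(J), is exact. -/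
open scoped Classical

/-- The wedge product `⋀_{i ∈ A} ν i` of the vectors indexed by a finite set `A`,
taken in increasing order of indices. -/
noncomputable def wedgeOf {k V : Type*} [CommRing k] [AddCommGroup V] [Module k V]
    {m : ℕ} (ν : Fin m → V) (A : Finset (Fin m)) : ExteriorAlgebra k V :=
  ((A.sort (· ≤ ·)).map fun i => ExteriorAlgebra.ι k (ν i)).prod

/-- `Π_I`: the principal ideal of the exterior algebra generated by the wedge of the
basis vectors indexed by `I`. -/
noncomputable def PiIdeal {k V : Type*} [CommRing k] [AddCommGroup V] [Module k V]
    {m : ℕ} (ν : Fin m → V) (I : Finset (Fin m)) :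
    Submodule k (ExteriorAlgebra k V) :=
  LinearMap.range (LinearMap.mulRight k (wedgeOf ν I))

/-- `I(J)`: the ideal of the exterior algebra generated by the degree-one elements
`ν_j`, `j ∈ J`. -/
noncomputable def genIdeal {k V : Type*} [CommRing k] [AddCommGroup V] [Module k V]
    {m : ℕ} (ν : Fin m → V) (J : Finset (Fin m)) :
    Submodule k (ExteriorAlgebra k V) :=
  ⨆ j ∈ J, LinearMap.range (LinearMap.mulRight k (ExteriorAlgebra.ι k (ν j)))

/-- The differential of the Taylor-like complex: a signed sum of the inclusion maps
`Π_I ↪ Π_{I'}` for `I' ⊂ I`, `|I| = |I'| + 1`, with the standard simplicial sign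
`(-1)^{position of the extra element}`; at the bottom (`I' = ∅`) this is the
augmentation `⊕_j Π_{{j}} → I(J)`. -/
noncomputable def taylorD {k V : Type*} [CommRing k] [AddCommGroup V] [Module k V]
    {m : ℕ} (J : Finset (Fin m))
    (f : Finset (Fin m) → ExteriorAlgebra k V) :
    Finset (Fin m) → ExteriorAlgebra k V :=
  fun I' => ∑ x ∈ J \ I',
    ((-1 : ℤ) ^ ((I'.filter (· < x)).card)) • f (insert x I')

section Aux
variable {k V : Type*} [CommRing k] [AddCommGroup V] [Module k V] {m : ℕ}

theorem wedgeOf_empty (ν : Fin m → V) : wedgeOf (k := k) ν ∅ = 1 := by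
  simp [wedgeOf]

theorem wedgeOf_singleton (ν : Fin m → V) (j : Fin m) :
    wedgeOf (k := k) ν {j} = ExteriorAlgebra.ι k (ν j) := by
  simp [wedgeOf]

theorem wedgeOf_insert (ν : Fin m → V) {x : Fin m} {A : Finset (Fin m)}
    (h : ∀ a ∈ A, x < a) :
    wedgeOf (k := k) ν (insert x A) = ExteriorAlgebra.ι k (ν x) * wedgeOf ν A := by
  have hx : x ∉ A := fun hx => absurd (h x hx) (lt_irrefl x)
  rw [wedgeOf, Finset.sort_insert _ (fun c hc => (h c hc).le) hx, List.map_cons, List.prod_cons]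
  rfl

theorem ι_swap (v u : V) : ExteriorAlgebra.ι k v * ExteriorAlgebra.ι k u
    = -(ExteriorAlgebra.ι k u * ExteriorAlgebra.ι k v) :=
  eq_neg_of_add_eq_zero_left (ExteriorAlgebra.ι_add_mul_swap v u)

theorem ι_mul_list_swap (v : V) (l : List V) :
    ExteriorAlgebra.ι k v * (l.map (ExteriorAlgebra.ι k)).prod
      = ((-1 : ℤ) ^ l.length) • ((l.map (ExteriorAlgebra.ι k)).prod * ExteriorAlgebra.ι k v) := by
  induction l with
  | nil => simp
  | cons u t ih =>
    rw [List.map_cons, List.prod_cons, ← mul_assoc, ι_swap, neg_mul, mul_assoc, ih,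
      mul_smul_comm, List.length_cons, pow_succ, mul_comm ((-1 : ℤ) ^ t.length) (-1),
      mul_smul, neg_one_zsmul, mul_assoc]

theorem wedgeOf_mul_ι_swap (ν : Fin m → V) (x : Fin m) (A : Finset (Fin m)) :
    wedgeOf (k := k) ν A * ExteriorAlgebra.ι k (ν x)
      = ((-1 : ℤ) ^ A.card) • (ExteriorAlgebra.ι k (ν x) * wedgeOf ν A) := by
  have h : ExteriorAlgebra.ι k (ν x) * wedgeOf (k := k) ν A
      = ((-1 : ℤ) ^ A.card) • (wedgeOf (k := k) ν A * ExteriorAlgebra.ι k (ν x)) := by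
    have h0 := ι_mul_list_swap (k := k) (ν x) ((A.sort (· ≤ ·)).map ν)
    rw [List.map_map, List.length_map, Finset.length_sort] at h0
    exact h0
  rw [h, smul_smul, ← pow_add, ← two_mul, pow_mul, neg_one_sq, one_pow, one_smul]
theorem ι_mul_wedgeOf (ν : Fin m → V) {x : Fin m} {A : Finset (Fin m)} (hx : x ∉ A) :
    ExteriorAlgebra.ι k (ν x) * wedgeOf (k := k) ν A
      = ((-1 : ℤ) ^ ((A.filter (· < x)).card)) • wedgeOf ν (insert x A) := by
  induction A using Finset.induction_on_min with
  | empty => simp [wedgeOf_empty, wedgeOf_singleton]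
  | insert a s ha ih =>
    have has : a ∉ s := fun h => lt_irrefl a (ha a h)
    have hxa : x ≠ a := fun h => hx (by rw [h]; exact Finset.mem_insert_self a s)
    rcases lt_or_gt_of_ne hxa with hlt | hgt
    · have hfil : (insert a s).filter (· < x) = ∅ := by
        refine Finset.filter_eq_empty_iff.2 ?_
        intro c hc
        rcases Finset.mem_insert.1 hc with rfl | hc2
        · exact not_lt_of_gt hlt
        · exact not_lt_of_gt (hlt.trans (ha c hc2))
      have h' : ∀ c ∈ insert a s, x < c := by
        intro c hc
        rcases Finset.mem_insert.1 hc with rfl | hc2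
        · exact hlt
        · exact hlt.trans (ha c hc2)
      rw [hfil, Finset.card_empty, pow_zero, one_smul]
      exact (wedgeOf_insert ν h').symm
    · have hxs : x ∉ s := fun h => hx (Finset.mem_insert_of_mem h)
      rw [wedgeOf_insert ν ha, ← mul_assoc, ι_swap, neg_mul, mul_assoc, ih hxs,
        mul_smul_comm]
      have hmin : ∀ c ∈ insert x s, a < c := by
        intro c hc
        rcases Finset.mem_insert.1 hc with rfl | hc2
        · exact hgt
        · exact ha c hc2
      have hins : insert x (insert a s) = insert a (insert x s) := Finset.insert_comm _ _ _
      rw [← wedgeOf_insert ν hmin, hins]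
      have hfil : (insert a s).filter (· < x) = insert a (s.filter (· < x)) := by
        rw [Finset.filter_insert, if_pos hgt]
      rw [hfil, Finset.card_insert_of_notMem (fun h => has (Finset.mem_of_mem_filter a h)),
        pow_succ, mul_comm _ (-1 : ℤ), mul_smul, neg_one_zsmul]

theorem wedgeOf_mul_wedgeOf_disjoint (ν : Fin m → V) {A B : Finset (Fin m)}
    (h : Disjoint A B) :
    ∃ ε : ℤ, (ε = 1 ∨ ε = -1) ∧
      wedgeOf (k := k) ν A * wedgeOf ν B = ε • wedgeOf ν (A ∪ B) := by
  induction A using Finset.induction_on_min generalizing B with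
  | empty => exact ⟨1, Or.inl rfl, by simp [wedgeOf_empty]⟩
  | insert a s ha ih =>
    have has : a ∉ s := fun hh => lt_irrefl a (ha a hh)
    have hsB : Disjoint s B := h.mono_left (Finset.subset_insert a s)
    have haB : a ∉ B := Finset.disjoint_left.1 h (Finset.mem_insert_self a s)
    obtain ⟨ε, hε, heq⟩ := ih hsB
    have haU : a ∉ s ∪ B := by simp [has, haB]
    refine ⟨ε * (-1 : ℤ) ^ (((s ∪ B).filter (· < a)).card), ?_, ?_⟩
    · rcases hε with rfl | rfl <;>
        rcases Nat.even_or_odd (((s ∪ B).filter (· < a)).card) with he | he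
      · exact Or.inl (by rw [he.neg_one_pow, one_mul])
      · exact Or.inr (by rw [he.neg_one_pow, one_mul])
      · exact Or.inr (by rw [he.neg_one_pow]; ring)
      · exact Or.inl (by rw [he.neg_one_pow]; ring)
    · rw [wedgeOf_insert ν ha, mul_assoc, heq, mul_smul_comm, ι_mul_wedgeOf ν haU,
        smul_smul, Finset.insert_union, mul_comm ε]
theorem wedgeOf_eq_smul (ν : Fin m → V) {a : Fin m} {A : Finset (Fin m)} (ha : a ∈ A) :
    wedgeOf (k := k) ν A = ((-1 : ℤ) ^ (((A.erase a).filter (· < a)).card)) •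
      (ExteriorAlgebra.ι k (ν a) * wedgeOf ν (A.erase a)) := by
  have h := ι_mul_wedgeOf (k := k) ν (Finset.notMem_erase a A)
  rw [Finset.insert_erase ha] at h
  rw [h, smul_smul, ← pow_add, ← two_mul, pow_mul, neg_one_sq, one_pow, one_smul]

theorem wedgeOf_mul_wedgeOf_of_not_disjoint (ν : Fin m → V) {A B : Finset (Fin m)}
    (h : ¬ Disjoint A B) : wedgeOf (k := k) ν A * wedgeOf ν B = 0 := by
  obtain ⟨a, haA, haB⟩ := Finset.not_disjoint_iff.1 h
  set u := ExteriorAlgebra.ι k (ν a) with hu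
  set P := wedgeOf (k := k) ν (A.erase a) with hP
  set Q := wedgeOf (k := k) ν (B.erase a) with hQ
  rw [wedgeOf_eq_smul ν haA, wedgeOf_eq_smul ν haB, smul_mul_assoc, mul_smul_comm, smul_smul]
  have key : u * P * (u * Q) = 0 := by
    rw [mul_assoc u P (u * Q), ← mul_assoc P u Q, hu, hP, wedgeOf_mul_ι_swap,
      smul_mul_assoc, mul_smul_comm, ← mul_assoc, ← mul_assoc,
      ExteriorAlgebra.ι_sq_zero, zero_mul, zero_mul, smul_zero]
  rw [key, smul_zero]

theorem contract_wedgeOf_not_mem (b : Module.Basis (Fin m) k V) {i : Fin m} {A : Finset (Fin m)}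
    (hi : i ∉ A) :
    CliffordAlgebra.contractLeft (Q := (0 : QuadraticForm k V)) (b.coord i) (wedgeOf (k := k) (⇑b) A) = 0 := by
  induction A using Finset.induction_on_min with
  | empty => rw [wedgeOf_empty]; apply CliffordAlgebra.contractLeft_one
  | insert a s ha ih =>
    have hia : i ≠ a := fun h => hi (h ▸ Finset.mem_insert_self a s)
    have his : i ∉ s := fun h => hi (Finset.mem_insert_of_mem h)
    rw [wedgeOf_insert _ ha, CliffordAlgebra.contractLeft_ι_mul, ih his, mul_zero,
      sub_zero, Module.Basis.coord_apply, Module.Basis.repr_self, Finsupp.single_apply,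
      if_neg (fun h => hia h.symm), zero_smul]

theorem contract_wedgeOf_mem (b : Module.Basis (Fin m) k V) {i : Fin m} {A : Finset (Fin m)}
    (hi : i ∈ A) :
    ∃ ε : ℤ, (ε = 1 ∨ ε = -1) ∧
      CliffordAlgebra.contractLeft (Q := (0 : QuadraticForm k V)) (b.coord i) (wedgeOf (k := k) (⇑b) A)
        = ε • wedgeOf (⇑b) (A.erase i) := by
  induction A using Finset.induction_on_min with
  | empty => exact absurd hi (Finset.notMem_empty i)
  | insert a s ha ih =>
    have has : a ∉ s := fun h => lt_irrefl a (ha a h)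
    rcases Finset.mem_insert.1 hi with rfl | his
    · refine ⟨1, Or.inl rfl, ?_⟩
      rw [wedgeOf_insert _ ha, CliffordAlgebra.contractLeft_ι_mul,
        contract_wedgeOf_not_mem b has, mul_zero, sub_zero, Module.Basis.coord_apply,
        Module.Basis.repr_self, Finsupp.single_apply, if_pos rfl, one_smul, one_smul,
        Finset.erase_insert has]
    · have hia : i ≠ a := fun h => has (h ▸ his)
      obtain ⟨ε, hε, heq⟩ := ih his
      refine ⟨-ε, by
        rcases hε with rfl | rfl
        · exact Or.inr rfl
        · exact Or.inl (by norm_num), ?_⟩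
      rw [wedgeOf_insert _ ha, CliffordAlgebra.contractLeft_ι_mul, heq, Module.Basis.coord_apply,
        Module.Basis.repr_self, Finsupp.single_apply, if_neg (fun h => hia h.symm), zero_smul,
        zero_sub, mul_smul_comm]
      have hmin : ∀ c ∈ s.erase i, a < c := fun c hc => ha c (Finset.mem_of_mem_erase hc)
      have hthis : Finset.erase (insert a s) i = insert a (s.erase i) := by
        rw [Finset.erase_insert_of_ne hia.symm]
      rw [hthis, ← wedgeOf_insert (⇑b) hmin, neg_smul]
theorem sign_mul_sign {a c : ℤ} (ha : a = 1 ∨ a = -1) (hc : c = 1 ∨ c = -1) :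
    a * c = 1 ∨ a * c = -1 := by
  rcases ha with rfl | rfl <;> rcases hc with rfl | rfl <;> simp

noncomputable def contrL (b : Module.Basis (Fin m) k V) :
    List (Fin m) → ExteriorAlgebra k V →ₗ[k] ExteriorAlgebra k V
  | [] => LinearMap.id
  | i :: l => (contrL b l) ∘ₗ
      (CliffordAlgebra.contractLeft (Q := (0 : QuadraticForm k V)) (b.coord i))

theorem contrL_wedgeOf (b : Module.Basis (Fin m) k V) (l : List (Fin m)) (T : Finset (Fin m)) :
    (∃ ε : ℤ, (ε = 1 ∨ ε = -1) ∧ l.toFinset ⊆ T ∧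
      contrL b l (wedgeOf (⇑b) T) = ε • wedgeOf (⇑b) (T \ l.toFinset)) ∨
    contrL b l (wedgeOf (⇑b) T) = 0 := by
  induction l generalizing T with
  | nil =>
    exact Or.inl ⟨1, Or.inl rfl, by simp, by simp [contrL]⟩
  | cons i l ih =>
    simp only [contrL, LinearMap.comp_apply]
    by_cases hi : i ∈ T
    · obtain ⟨ε₀, hε₀, h0⟩ := contract_wedgeOf_mem b hi
      rw [h0, map_zsmul]
      rcases ih (T.erase i) with ⟨ε, hε, hsub, heq⟩ | hz
      · left
        refine ⟨ε₀ * ε, sign_mul_sign hε₀ hε, ?_, ?_⟩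
        · intro c hc
          rcases List.mem_cons.1 (List.mem_toFinset.1 hc) with rfl | h
          · exact hi
          · exact Finset.mem_of_mem_erase (hsub (List.mem_toFinset.2 h))
        · rw [heq, smul_smul]
          congr 2
          ext c
          simp only [Finset.mem_sdiff, Finset.mem_erase, List.toFinset_cons,
            Finset.mem_insert, List.mem_toFinset]
          tauto
      · right; rw [hz, smul_zero]
    · rw [contract_wedgeOf_not_mem b hi, map_zero]
      exact Or.inr rfl

theorem contrL_sort_self (b : Module.Basis (Fin m) k V) (S : Finset (Fin m)) :
    contrL b (S.sort (· ≤ ·)) (wedgeOf (⇑b) S) = 1 := by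
  induction S using Finset.induction_on_min with
  | empty => simp [contrL, wedgeOf_empty]
  | insert a s ha ih =>
    have has : a ∉ s := fun h => lt_irrefl a (ha a h)
    rw [Finset.sort_insert _ (fun c hc => (ha c hc).le) has]
    simp only [contrL, LinearMap.comp_apply]
    rw [wedgeOf_insert _ ha, CliffordAlgebra.contractLeft_ι_mul,
      contract_wedgeOf_not_mem b has, mul_zero, sub_zero, Module.Basis.coord_apply,
      Module.Basis.repr_self, Finsupp.single_apply, if_pos rfl, one_smul, ih]

theorem algebraMapInv_ι (v : V) : ExteriorAlgebra.algebraMapInv (ExteriorAlgebra.ι k v) = 0 := by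
  rw [ExteriorAlgebra.algebraMapInv, ExteriorAlgebra.lift_ι_apply]
  rfl

theorem algebraMapInv_wedgeOf (ν : Fin m → V) {A : Finset (Fin m)} (hA : A.Nonempty) :
    ExteriorAlgebra.algebraMapInv (wedgeOf (k := k) ν A) = 0 := by
  obtain ⟨a, ha⟩ := hA
  rw [wedgeOf_eq_smul ν ha, map_zsmul, map_mul, algebraMapInv_ι, zero_mul, smul_zero]

theorem wedgeOf_linearIndependent (b : Module.Basis (Fin m) k V) :
    LinearIndependent k (fun S : Finset (Fin m) => wedgeOf (k := k) (⇑b) S) := by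
  rw [Fintype.linearIndependent_iff]
  intro g hg S
  have hL : (ExteriorAlgebra.algebraMapInv.toLinearMap.comp
      (contrL b (S.sort (· ≤ ·)))) (∑ T : Finset (Fin m), g T • wedgeOf (⇑b) T) = 0 := by
    rw [hg, map_zero]
  rw [map_sum] at hL
  have key : ∀ T : Finset (Fin m),
      (ExteriorAlgebra.algebraMapInv.toLinearMap.comp
        (contrL b (S.sort (· ≤ ·)))) (g T • wedgeOf (⇑b) T)
      = if T = S then g T else 0 := by
    intro T
    rw [map_smul]
    by_cases hTS : T = S
    · subst hTS
      rw [if_pos rfl, LinearMap.comp_apply, contrL_sort_self, AlgHom.toLinearMap_apply,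
        map_one, smul_eq_mul, mul_one]
    · rw [if_neg hTS, LinearMap.comp_apply]
      rcases contrL_wedgeOf b (S.sort (· ≤ ·)) T with ⟨ε, hε, hsub, heq⟩ | hz
      · rw [Finset.sort_toFinset] at hsub heq
        have hne : (T \ S).Nonempty := by
          rw [Finset.sdiff_nonempty]
          intro hTsub
          exact hTS (Finset.Subset.antisymm hTsub hsub)
        rw [heq, AlgHom.toLinearMap_apply, map_zsmul, algebraMapInv_wedgeOf _ hne,
          smul_zero, smul_zero]
      · rw [hz, AlgHom.toLinearMap_apply, map_zero, smul_zero]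
  simp only [key] at hL
  rwa [Finset.sum_ite_eq' Finset.univ S g, if_pos (Finset.mem_univ S)] at hL
theorem wedgeOf_span (b : Module.Basis (Fin m) k V) :
    ⊤ ≤ Submodule.span k (Set.range (fun S : Finset (Fin m) => wedgeOf (k := k) (⇑b) S)) := by
  set Sp := Submodule.span k (Set.range fun S : Finset (Fin m) => wedgeOf (k := k) (⇑b) S)
    with hSp
  have hw : ∀ S : Finset (Fin m), wedgeOf (k := k) (⇑b) S ∈ Sp :=
    fun S => Submodule.subset_span ⟨S, rfl⟩
  have hww : ∀ A B : Finset (Fin m),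
      wedgeOf (k := k) (⇑b) A * wedgeOf (⇑b) B ∈ Sp := by
    intro A B
    by_cases hd : Disjoint A B
    · obtain ⟨ε, hε, heq⟩ := wedgeOf_mul_wedgeOf_disjoint (k := k) (⇑b) hd
      rw [heq, ← Int.cast_smul_eq_zsmul k]
      exact Submodule.smul_mem _ _ (hw _)
    · rw [wedgeOf_mul_wedgeOf_of_not_disjoint (⇑b) hd]
      exact Submodule.zero_mem _
  have hmulw : ∀ (B : Finset (Fin m)), ∀ y ∈ Sp, y * wedgeOf (k := k) (⇑b) B ∈ Sp := by
    intro B y hy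
    induction hy using Submodule.span_induction with
    | mem x hx => obtain ⟨A, rfl⟩ := hx; exact hww A B
    | zero => rw [zero_mul]; exact Submodule.zero_mem _
    | add x y _ _ hx hy => rw [add_mul]; exact Submodule.add_mem _ hx hy
    | smul c x _ hx => rw [smul_mul_assoc]; exact Submodule.smul_mem _ _ hx
  have hmul : ∀ y ∈ Sp, ∀ z ∈ Sp, y * z ∈ Sp := by
    intro y hy z hz
    induction hz using Submodule.span_induction with
    | mem x hx => obtain ⟨B, rfl⟩ := hx; exact hmulw B y hy
    | zero => rw [mul_zero]; exact Submodule.zero_mem _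
    | add u v _ _ hu hv => rw [mul_add]; exact Submodule.add_mem _ hu hv
    | smul c x _ hx => rw [mul_smul_comm]; exact Submodule.smul_mem _ _ hx
  intro x hx
  clear hx
  induction x using CliffordAlgebra.induction with
  | algebraMap r =>
    rw [Algebra.algebraMap_eq_smul_one]
    exact Submodule.smul_mem _ _ (by simpa [wedgeOf_empty] using hw (∅ : Finset (Fin m)))
  | ι v =>
    have hv : ExteriorAlgebra.ι k v
        = ∑ i : Fin m, b.repr v i • ExteriorAlgebra.ι k (b i) := by
      conv_lhs => rw [← b.sum_repr v]
      rw [map_sum]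
      simp
    rw [hv]
    exact Submodule.sum_mem _ fun i _ => Submodule.smul_mem _ _
      (by simpa [wedgeOf_singleton] using hw ({i} : Finset (Fin m)))
  | mul x y hx hy => exact hmul x hx y hy
  | add x y hx hy => exact Submodule.add_mem _ hx hy

noncomputable def exteriorBasis (b : Module.Basis (Fin m) k V) :
    Module.Basis (Finset (Fin m)) k (ExteriorAlgebra k V) :=
  Module.Basis.mk (wedgeOf_linearIndependent b) (wedgeOf_span b)

theorem exteriorBasis_apply (b : Module.Basis (Fin m) k V) (S : Finset (Fin m)) :
    exteriorBasis b S = wedgeOf (k := k) (⇑b) S :=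
  Module.Basis.mk_apply _ _ _

theorem piIdeal_eq_span (b : Module.Basis (Fin m) k V) (I : Finset (Fin m)) :
    PiIdeal (⇑b) I = Submodule.span k ((exteriorBasis b) '' {S | I ⊆ S}) := by
  apply le_antisymm
  · rintro _ ⟨x, rfl⟩
    rw [LinearMap.mulRight_apply]
    have hx : x ∈ Submodule.span k
        (Set.range fun S : Finset (Fin m) => wedgeOf (k := k) (⇑b) S) :=
      wedgeOf_span b trivial
    induction hx using Submodule.span_induction with
    | mem y hy =>
      obtain ⟨S, rfl⟩ := hy
      by_cases hd : Disjoint S I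
      · obtain ⟨ε, hε, heq⟩ := wedgeOf_mul_wedgeOf_disjoint (k := k) (⇑b) hd
        rw [heq, ← Int.cast_smul_eq_zsmul k]
        refine Submodule.smul_mem _ _ (Submodule.subset_span ⟨S ∪ I, ?_, ?_⟩)
        · exact Finset.subset_union_right
        · rw [exteriorBasis_apply]
      · rw [wedgeOf_mul_wedgeOf_of_not_disjoint (⇑b) hd]
        exact Submodule.zero_mem _
    | zero => rw [zero_mul]; exact Submodule.zero_mem _
    | add u v _ _ hu hv => rw [add_mul]; exact Submodule.add_mem _ hu hv
    | smul c y _ hy => rw [smul_mul_assoc]; exact Submodule.smul_mem _ _ hy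
  · rw [Submodule.span_le]
    rintro _ ⟨S, hS, rfl⟩
    obtain ⟨ε, hε, heq⟩ := wedgeOf_mul_wedgeOf_disjoint (k := k) (⇑b)
      (Finset.sdiff_disjoint : Disjoint (S \ I) I)
    rw [Finset.sdiff_union_of_subset hS] at heq
    refine ⟨(ε : k) • wedgeOf (⇑b) (S \ I), ?_⟩
    rw [LinearMap.mulRight_apply, smul_mul_assoc, heq, Int.cast_smul_eq_zsmul k, smul_smul]
    have hone : ε * ε = 1 := by rcases hε with rfl | rfl <;> norm_num
    rw [hone, one_smul, exteriorBasis_apply]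
theorem mem_piIdeal_iff (b : Module.Basis (Fin m) k V) (I : Finset (Fin m))
    (x : ExteriorAlgebra k V) :
    x ∈ PiIdeal (⇑b) I ↔ ∀ S, (exteriorBasis b).repr x S ≠ 0 → I ⊆ S := by
  rw [piIdeal_eq_span, Module.Basis.mem_span_image]
  constructor
  · intro h S hS
    exact h (Finsupp.mem_support_iff.2 hS)
  · intro h S hS
    exact h S (Finsupp.mem_support_iff.1 hS)

theorem genIdeal_eq_span (b : Module.Basis (Fin m) k V) (J : Finset (Fin m)) :
    genIdeal (⇑b) J
      = Submodule.span k ((exteriorBasis b) '' {S | (S ∩ J).Nonempty}) := by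
  apply le_antisymm
  · refine iSup₂_le ?_
    intro j hj
    rintro _ ⟨x, rfl⟩
    rw [LinearMap.mulRight_apply, ← wedgeOf_singleton (k := k) (⇑b) j]
    have hx : x ∈ Submodule.span k
        (Set.range fun S : Finset (Fin m) => wedgeOf (k := k) (⇑b) S) :=
      wedgeOf_span b trivial
    induction hx using Submodule.span_induction with
    | mem y hy =>
      obtain ⟨S, rfl⟩ := hy
      by_cases hd : Disjoint S {j}
      · obtain ⟨ε, hε, heq⟩ := wedgeOf_mul_wedgeOf_disjoint (k := k) (⇑b) hd
        rw [heq, ← Int.cast_smul_eq_zsmul k]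
        refine Submodule.smul_mem _ _ (Submodule.subset_span ⟨S ∪ {j}, ?_, ?_⟩)
        · exact ⟨j, Finset.mem_inter.2 ⟨Finset.mem_union_right _ (Finset.mem_singleton_self j),
            hj⟩⟩
        · rw [exteriorBasis_apply]
      · rw [wedgeOf_mul_wedgeOf_of_not_disjoint (⇑b) hd]
        exact Submodule.zero_mem _
    | zero => rw [zero_mul]; exact Submodule.zero_mem _
    | add u v _ _ hu hv => rw [add_mul]; exact Submodule.add_mem _ hu hv
    | smul c y _ hy => rw [smul_mul_assoc]; exact Submodule.smul_mem _ _ hy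
  · rw [Submodule.span_le]
    rintro _ ⟨S, hS, rfl⟩
    obtain ⟨j, hj⟩ := hS
    have hjS : j ∈ S := (Finset.mem_inter.1 hj).1
    have hjJ : j ∈ J := (Finset.mem_inter.1 hj).2
    have hd : Disjoint (S.erase j) ({j} : Finset (Fin m)) := by
      simp [Finset.disjoint_singleton_right]
    obtain ⟨ε, hε, heq⟩ := wedgeOf_mul_wedgeOf_disjoint (k := k) (⇑b) hd
    have hU : S.erase j ∪ {j} = S := by
      ext c
      simp only [Finset.mem_union, Finset.mem_erase, Finset.mem_singleton]
      constructor
      · rintro (⟨_, hc⟩ | rfl) <;> [exact hc; exact hjS]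
      · intro hc
        by_cases hcj : c = j
        · exact Or.inr hcj
        · exact Or.inl ⟨hcj, hc⟩
    rw [hU] at heq
    have hmem : exteriorBasis b S ∈
        LinearMap.range (LinearMap.mulRight k (ExteriorAlgebra.ι k (b j))) := by
      refine ⟨(ε : k) • wedgeOf (⇑b) (S.erase j), ?_⟩
      rw [LinearMap.mulRight_apply, smul_mul_assoc, ← wedgeOf_singleton (k := k) (⇑b) j,
        heq, Int.cast_smul_eq_zsmul k, smul_smul]
      have hone : ε * ε = 1 := by rcases hε with rfl | rfl <;> norm_num
      rw [hone, one_smul, exteriorBasis_apply]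
    exact Submodule.mem_iSup_of_mem j (Submodule.mem_iSup_of_mem hjJ hmem)

theorem mem_genIdeal_iff (b : Module.Basis (Fin m) k V) (J : Finset (Fin m))
    (x : ExteriorAlgebra k V) :
    x ∈ genIdeal (⇑b) J ↔ ∀ S, (exteriorBasis b).repr x S ≠ 0 → (S ∩ J).Nonempty := by
  rw [genIdeal_eq_span, Module.Basis.mem_span_image]
  constructor
  · intro h S hS
    exact h (Finsupp.mem_support_iff.2 hS)
  · intro h S hS
    exact h S (Finsupp.mem_support_iff.1 hS)
noncomputable def projF (b : Module.Basis (Fin m) k V) (p : Finset (Fin m) → Prop)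
    (x : ExteriorAlgebra k V) : ExteriorAlgebra k V :=
  ∑ S : Finset (Fin m),
    if p S then ((exteriorBasis b).repr x S) • exteriorBasis b S else 0

theorem repr_projF (b : Module.Basis (Fin m) k V) (p : Finset (Fin m) → Prop)
    (x : ExteriorAlgebra k V) (S : Finset (Fin m)) :
    (exteriorBasis b).repr (projF b p x) S
      = if p S then (exteriorBasis b).repr x S else 0 := by
  rw [projF, map_sum, Finsupp.finset_sum_apply]
  have h1 : ∀ S' : Finset (Fin m),
      ((exteriorBasis b).repr
        (if p S' then ((exteriorBasis b).repr x S') • exteriorBasis b S' else 0)) S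
      = if S' = S then (if p S' then (exteriorBasis b).repr x S' else 0) else 0 := by
    intro S'
    by_cases hp : p S'
    · rw [if_pos hp, map_smul, Module.Basis.repr_self, Finsupp.smul_apply, Finsupp.single_apply]
      by_cases hSS : S' = S
      · rw [if_pos hSS, if_pos hSS, if_pos hp, smul_eq_mul, mul_one]
      · rw [if_neg hSS, if_neg hSS, smul_eq_mul, mul_zero]
    · rw [if_neg hp, map_zero, Finsupp.zero_apply]
      simp [hp]
  rw [Finset.sum_congr rfl (fun S' _ => h1 S'),
    Finset.sum_ite_eq' Finset.univ S
      (fun S' => if p S' then (exteriorBasis b).repr x S' else 0),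
    if_pos (Finset.mem_univ S)]

theorem repr_taylorD (b : Module.Basis (Fin m) k V) (J : Finset (Fin m))
    (f : Finset (Fin m) → ExteriorAlgebra k V) (I' T : Finset (Fin m)) :
    (exteriorBasis b).repr (taylorD (k := k) J f I') T
      = ∑ x ∈ J \ I', ((-1 : ℤ) ^ ((I'.filter (· < x)).card)) •
          (exteriorBasis b).repr (f (insert x I')) T := by
  rw [taylorD, map_sum, Finsupp.finset_sum_apply]
  refine Finset.sum_congr rfl ?_
  intro x _
  rw [map_zsmul, Finsupp.smul_apply]

end Aux

set_option maxHeartbeats 2000000 in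
/-- exactness of the Taylor-like complex
`0 ← I(J) ← ⊕_{|I|=1} Π_I ← ⊕_{|I|=2} Π_I ← ⋯` (for `I ⊆ J` nonempty). Cochains of
grade `i` are encoded as functions `f` with `f I ∈ Π_I`, supported on subsets `I ⊆ J`
with `|I| = i`; the value of the differential at `∅` is the augmentation. -/
theorem taylor_complex_exact {k V : Type*} [CommRing k] [AddCommGroup V] [Module k V]
    {m : ℕ} (b : Module.Basis (Fin m) k V) (J : Finset (Fin m)) (hJ : J.Nonempty) :
    -- exactness at `I(J)`: the augmentation is surjective
    (∀ z ∈ genIdeal (⇑b) J, ∃ f : Finset (Fin m) → ExteriorAlgebra k V,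
      (∀ I, f I ∈ PiIdeal (⇑b) I) ∧ (∀ I, f I ≠ 0 → I ⊆ J ∧ I.card = 1) ∧
      taylorD J f ∅ = z) ∧
    -- exactness at every `⊕_{|I| = i} Π_I`, `i ≥ 1`
    (∀ i : ℕ, 1 ≤ i → ∀ f : Finset (Fin m) → ExteriorAlgebra k V,
      (∀ I, f I ∈ PiIdeal (⇑b) I) → (∀ I, f I ≠ 0 → I ⊆ J ∧ I.card = i) →
      (∀ I', taylorD J f I' = 0) →
      ∃ g : Finset (Fin m) → ExteriorAlgebra k V,
        (∀ I, g I ∈ PiIdeal (⇑b) I) ∧ (∀ I, g I ≠ 0 → I ⊆ J ∧ I.card = i + 1) ∧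
        taylorD J g = f) := by
  classical
  constructor
  · -- surjectivity of the augmentation
    intro z hz
    set f : Finset (Fin m) → ExteriorAlgebra k V := fun I =>
      if I.card = 1 ∧ I ⊆ J then
        ∑ j ∈ I, projF b (fun S => ∃ h : (S ∩ J).Nonempty, (S ∩ J).min' h = j) z
      else 0 with hf
    have hfsing : ∀ j ∈ J, f {j}
        = projF b (fun S => ∃ h : (S ∩ J).Nonempty, (S ∩ J).min' h = j) z := by
      intro j hj
      simp only [hf]
      rw [if_pos ⟨Finset.card_singleton j, Finset.singleton_subset_iff.2 hj⟩,
        Finset.sum_singleton]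
    refine ⟨f, ?_, ?_, ?_⟩
    · intro I
      simp only [hf]
      by_cases hI : I.card = 1 ∧ I ⊆ J
      · rw [if_pos hI]
        obtain ⟨j, rfl⟩ := Finset.card_eq_one.1 hI.1
        rw [Finset.sum_singleton, mem_piIdeal_iff]
        intro S hS
        rw [repr_projF] at hS
        by_cases hcond : ∃ h : (S ∩ J).Nonempty, (S ∩ J).min' h = j
        · obtain ⟨hW, hmin⟩ := hcond
          have : j ∈ S := by
            rw [← hmin]
            exact Finset.mem_of_mem_inter_left ((S ∩ J).min'_mem hW)
          exact Finset.singleton_subset_iff.2 this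
        · rw [if_neg hcond] at hS
          exact absurd rfl hS
      · rw [if_neg hI]; exact Submodule.zero_mem _
    · intro I hne
      by_cases hI : I.card = 1 ∧ I ⊆ J
      · exact ⟨hI.2, hI.1⟩
      · exact absurd (by simp only [hf]; exact if_neg hI) hne
    · apply (exteriorBasis b).ext_elem
      intro T
      rw [repr_taylorD]
      have hsimp : ∀ x ∈ J \ (∅ : Finset (Fin m)),
          ((-1 : ℤ) ^ (((∅ : Finset (Fin m)).filter (· < x)).card)) •
            (exteriorBasis b).repr (f (insert x ∅)) T
          = if (∃ h : (T ∩ J).Nonempty, (T ∩ J).min' h = x) then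
              (exteriorBasis b).repr z T else 0 := by
        intro x hx
        have hxJ : x ∈ J := (Finset.mem_sdiff.1 hx).1
        rw [Finset.filter_empty, Finset.card_empty, pow_zero, one_smul,
          Finset.insert_empty, hfsing x hxJ, repr_projF]
        exact ite_congr rfl (fun _ => rfl) (fun _ => rfl)
      rw [Finset.sum_congr rfl hsimp]
      by_cases hW : (T ∩ J).Nonempty
      · have hmem : (T ∩ J).min' hW ∈ J \ (∅ : Finset (Fin m)) := by
          rw [Finset.sdiff_empty]
          exact Finset.mem_of_mem_inter_right ((T ∩ J).min'_mem hW)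
        rw [Finset.sum_eq_single_of_mem _ hmem]
        · rw [if_pos ⟨hW, rfl⟩]
        · intro x hx hxne
          rw [if_neg]
          rintro ⟨hW', hmin⟩
          exact hxne (hmin ▸ rfl)
      · have hz0 : (exteriorBasis b).repr z T = 0 := by
          by_contra h0
          exact hW ((mem_genIdeal_iff b J z).1 hz T h0)
        rw [hz0]
        refine (Finset.sum_eq_zero ?_)
        intro x hx
        rw [if_neg]
        rintro ⟨hW', _⟩
        exact hW hW'
  · intro i hi f hfPi hfSupp hdf
    set g : Finset (Fin m) → ExteriorAlgebra k V := fun I =>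
      ∑ j ∈ I, projF b (fun S => ∃ h : (S ∩ J).Nonempty, (S ∩ J).min' h = j)
        (f (I.erase j)) with hg
    have hc1 : ∀ K T, (exteriorBasis b).repr (f K) T ≠ 0 → K ⊆ T :=
      fun K T h => (mem_piIdeal_iff b K (f K)).1 (hfPi K) T h
    have hc2 : ∀ K T, (exteriorBasis b).repr (f K) T ≠ 0 → K ⊆ J ∧ K.card = i := by
      intro K T h
      refine hfSupp K ?_
      intro h0
      rw [h0] at h
      simp at h
    have hc3 : ∀ (K' T : Finset (Fin m)),
        ∑ x ∈ J \ K', ((-1 : ℤ) ^ ((K'.filter (· < x)).card)) •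
          (exteriorBasis b).repr (f (insert x K')) T = 0 := by
      intro K' T
      rw [← repr_taylorD, hdf K']
      simp
    have hgW : ∀ I T (hW : (T ∩ J).Nonempty), (exteriorBasis b).repr (g I) T
        = if (T ∩ J).min' hW ∈ I then
            (exteriorBasis b).repr (f (I.erase ((T ∩ J).min' hW))) T else 0 := by
      intro I T hW
      simp only [hg]
      rw [map_sum, Finsupp.finset_sum_apply]
      have hstep : ∀ j ∈ I, ((exteriorBasis b).repr (projF b
            (fun S => ∃ h : (S ∩ J).Nonempty, (S ∩ J).min' h = j) (f (I.erase j)))) T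
          = (if (T ∩ J).min' hW = j then ((exteriorBasis b).repr (f (I.erase j))) T else 0) := by
        intro j _
        rw [repr_projF]
        exact ite_congr (propext ⟨fun ⟨h', he⟩ => he, fun he => ⟨hW, he⟩⟩)
          (fun _ => rfl) (fun _ => rfl)
      rw [Finset.sum_congr rfl hstep, Finset.sum_ite_eq I ((T ∩ J).min' hW)
        (fun j => ((exteriorBasis b).repr (f (I.erase j))) T)]
    have hg0 : ∀ I T, ¬ (T ∩ J).Nonempty → (exteriorBasis b).repr (g I) T = 0 := by
      intro I T hW
      simp only [hg]
      rw [map_sum, Finsupp.finset_sum_apply]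
      refine Finset.sum_eq_zero fun j hj => ?_
      rw [repr_projF, if_neg]
      rintro ⟨hW', _⟩
      exact hW hW'
    refine ⟨g, ?_, ?_, ?_⟩
    · intro I
      rw [mem_piIdeal_iff]
      intro T hT
      by_cases hW : (T ∩ J).Nonempty
      · rw [hgW I T hW] at hT
        by_cases hmem : (T ∩ J).min' hW ∈ I
        · rw [if_pos hmem] at hT
          have hsub : I.erase ((T ∩ J).min' hW) ⊆ T := hc1 _ _ hT
          have hminT : (T ∩ J).min' hW ∈ T :=
            Finset.mem_of_mem_inter_left ((T ∩ J).min'_mem hW)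
          intro c hc
          by_cases hcm : c = (T ∩ J).min' hW
          · rw [hcm]; exact hminT
          · exact hsub (Finset.mem_erase.2 ⟨hcm, hc⟩)
        · rw [if_neg hmem] at hT; exact absurd rfl hT
      · rw [hg0 I T hW] at hT; exact absurd rfl hT
    · intro I hne
      have hex : ∃ T, (exteriorBasis b).repr (g I) T ≠ 0 := by
        by_contra h0
        push_neg at h0
        refine hne ((exteriorBasis b).ext_elem fun T => ?_)
        rw [h0 T, map_zero, Finsupp.coe_zero, Pi.zero_apply]
      obtain ⟨T, hT⟩ := hex
      have hW : (T ∩ J).Nonempty := by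
        by_contra hW
        exact hT (hg0 I T hW)
      rw [hgW I T hW] at hT
      by_cases hmem : (T ∩ J).min' hW ∈ I
      swap
      · rw [if_neg hmem] at hT; exact absurd rfl hT
      rw [if_pos hmem] at hT
      have hfe : f (I.erase ((T ∩ J).min' hW)) ≠ 0 := by
        intro h0
        rw [h0] at hT
        simp at hT
      obtain ⟨hsubJ, hcard⟩ := hfSupp _ hfe
      have hminJ : (T ∩ J).min' hW ∈ J :=
        Finset.mem_of_mem_inter_right ((T ∩ J).min'_mem hW)
      constructor
      · intro c hc
        by_cases hcm : c = (T ∩ J).min' hW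
        · rw [hcm]; exact hminJ
        · exact hsubJ (Finset.mem_erase.2 ⟨hcm, hc⟩)
      · rw [← Finset.card_erase_add_one hmem, hcard]
    · funext I'
      apply (exteriorBasis b).ext_elem
      intro T
      rw [repr_taylorD]
      by_cases hW : (T ∩ J).Nonempty
      · set a := (T ∩ J).min' hW with ha
        have haJ : a ∈ J := Finset.mem_of_mem_inter_right ((T ∩ J).min'_mem hW)
        have hrw : ∀ x ∈ J \ I',
            ((-1 : ℤ) ^ ((I'.filter (· < x)).card)) •
              (exteriorBasis b).repr (g (insert x I')) T
            = ((-1 : ℤ) ^ ((I'.filter (· < x)).card)) •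
              (if a ∈ insert x I' then
                (exteriorBasis b).repr (f ((insert x I').erase a)) T else 0) := by
          intro x hx
          rw [hgW (insert x I') T hW]
        rw [Finset.sum_congr rfl hrw]
        by_cases haI : a ∈ I'
        · have hterm0 := hc3 (I'.erase a) T
          have hJsplit : J \ I'.erase a = insert a (J \ I') := by
            ext c
            simp only [Finset.mem_sdiff, Finset.mem_erase, Finset.mem_insert]
            by_cases hca : c = a
            · subst hca; simp [haJ]
            · simp [hca]
          have hanotin : a ∉ J \ I' := fun hmem => (Finset.mem_sdiff.1 hmem).2 haI
          rw [hJsplit, Finset.sum_insert hanotin, Finset.insert_erase haI] at hterm0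
          have hfirst : ((-1 : ℤ) ^ (((I'.erase a).filter (· < a)).card)) •
              (exteriorBasis b).repr (f I') T = (exteriorBasis b).repr (f I') T := by
            by_cases hcz : (exteriorBasis b).repr (f I') T = 0
            · rw [hcz, smul_zero]
            · have hsub : I' ⊆ T ∩ J :=
                Finset.subset_inter (hc1 _ _ hcz) (hc2 _ _ hcz).1
              have hfil0 : (I'.erase a).filter (· < a) = ∅ := by
                refine Finset.filter_eq_empty_iff.2 ?_
                intro c hc
                exact not_lt.2 ((T ∩ J).min'_le c (hsub (Finset.mem_of_mem_erase hc)))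
              rw [hfil0, Finset.card_empty, pow_zero, one_smul]
          rw [hfirst] at hterm0
          have hrest : ∀ x ∈ J \ I',
              ((-1 : ℤ) ^ (((I'.erase a).filter (· < x)).card)) •
                (exteriorBasis b).repr (f (insert x (I'.erase a))) T
              = -(((-1 : ℤ) ^ ((I'.filter (· < x)).card)) •
                  (exteriorBasis b).repr (f (insert x (I'.erase a))) T) := by
            intro x hx
            by_cases hcz : (exteriorBasis b).repr (f (insert x (I'.erase a))) T = 0
            · rw [hcz, smul_zero, smul_zero, neg_zero]
            · have hsub : insert x (I'.erase a) ⊆ T ∩ J :=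
                Finset.subset_inter (hc1 _ _ hcz) (hc2 _ _ hcz).1
              have hxne : x ≠ a := fun h => (Finset.mem_sdiff.1 hx).2 (h ▸ haI)
              have hxa : a < x :=
                lt_of_le_of_ne ((T ∩ J).min'_le x (hsub (Finset.mem_insert_self x _)))
                  (fun h => hxne h.symm)
              have hfil : I'.filter (· < x) = insert a ((I'.erase a).filter (· < x)) := by
                conv_lhs => rw [← Finset.insert_erase haI]
                rw [Finset.filter_insert, if_pos hxa]
              have hnotin : a ∉ (I'.erase a).filter (· < x) :=
                fun h => Finset.notMem_erase a I' (Finset.mem_of_mem_filter a h)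
              rw [hfil, Finset.card_insert_of_notMem hnotin, pow_succ, mul_neg_one,
                neg_smul, neg_neg]
          rw [Finset.sum_congr rfl hrest, Finset.sum_neg_distrib] at hterm0
          have hgoal := eq_neg_of_add_eq_zero_left hterm0
          rw [neg_neg] at hgoal
          have hfinal : ∀ x ∈ J \ I',
              ((-1 : ℤ) ^ ((I'.filter (· < x)).card)) •
                (if a ∈ insert x I' then
                  (exteriorBasis b).repr (f ((insert x I').erase a)) T else 0)
              = ((-1 : ℤ) ^ ((I'.filter (· < x)).card)) •
                  (exteriorBasis b).repr (f (insert x (I'.erase a))) T := by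
            intro x hx
            have hxne : x ≠ a := fun h => (Finset.mem_sdiff.1 hx).2 (h ▸ haI)
            rw [if_pos (Finset.mem_insert_of_mem haI), Finset.erase_insert_of_ne hxne]
          rw [Finset.sum_congr rfl hfinal, ← hgoal]
        · have haJI : a ∈ J \ I' := Finset.mem_sdiff.2 ⟨haJ, haI⟩
          rw [Finset.sum_eq_single_of_mem a haJI (fun x hx hxa => by
            rw [if_neg (fun h => by
              rcases Finset.mem_insert.1 h with h1 | h1
              · exact hxa h1.symm
              · exact haI h1), smul_zero])]
          rw [if_pos (Finset.mem_insert_self a I'), Finset.erase_insert haI]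
          by_cases hcz : (exteriorBasis b).repr (f I') T = 0
          · rw [hcz, smul_zero]
          · have hsub : I' ⊆ T ∩ J :=
              Finset.subset_inter (hc1 _ _ hcz) (hc2 _ _ hcz).1
            have hfil0 : I'.filter (· < a) = ∅ := by
              refine Finset.filter_eq_empty_iff.2 ?_
              intro c hc
              exact not_lt.2 ((T ∩ J).min'_le c (hsub hc))
            rw [hfil0, Finset.card_empty, pow_zero, one_smul]
      · have hzz : ∀ x ∈ J \ I', ((-1 : ℤ) ^ ((I'.filter (· < x)).card)) •
            (exteriorBasis b).repr (g (insert x I')) T = 0 := by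
          intro x hx
          rw [hg0 _ T hW, smul_zero]
        rw [Finset.sum_eq_zero hzz]
        have hz0 : (exteriorBasis b).repr (f I') T = 0 := by
          by_contra hcz
          have hsub : I' ⊆ T ∩ J :=
            Finset.subset_inter (hc1 _ _ hcz) (hc2 _ _ hcz).1
          have hne : I'.Nonempty := Finset.card_pos.1 (by rw [(hc2 _ _ hcz).2]; omega)
          obtain ⟨c, hc⟩ := hne
          exact hW ⟨c, hsub hc⟩
        rw [hz0]
end
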